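/- Let q = lcm(q_1,…,q_n) and let G ∈ ℕ be such that every monomial of weighted degree m + hq with m > G is divisible by a monomial of weighted degree hq, for every h ∈ ℕ. Let I ⊂ R be a homogeneous ideal generated in degrees ≤ d. If the graded component I_i is spanned as a K-vector space by a lexsegment for every i ≤ d + q + G, then I is a lexicographic ideal (i.e. every graded component of I is spanned by a lexsegment). -/

import Mathlib

open MvPolynomial

/-- The lexicographic order on exponents of monomials (`LexLT μ ν` means `X^μ < X^ν`),
for the variable order `X 1 > X 2 > … > X N`. -/
def LexLT {n : ℕ} (μ ν : Fin n →₀ ℕ) : Prop :=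
  ∃ k, μ k < ν k ∧ ∀ s, s < k → μ s = ν s

/-- The degree-`i` component of the ideal `I` is spanned, as a `K`-vector space, by a
lexsegment: there is a set `L` of exponents of monomials of weighted degree `i`, closed
under passing to lexicographically larger monomials of the same degree, such that the
homogeneous elements of degree `i` of `I` are exactly the `K`-linear span of the
monomials `X^μ`, `μ ∈ L`. -/
def LexSegComponent {K : Type*} [Field K] {n : ℕ} (w : Fin n → ℕ)
    (I : Ideal (MvPolynomial (Fin n) K)) (i : ℕ) : Prop :=
  ∃ L : Set (Fin n →₀ ℕ),
    (∀ μ ∈ L, Finsupp.weight w μ = i) ∧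
    (∀ μ ∈ L, ∀ ν : Fin n →₀ ℕ, Finsupp.weight w ν = i → LexLT μ ν → ν ∈ L) ∧
    (∀ f : MvPolynomial (Fin n) K,
      (f ∈ I ∧ f.IsWeightedHomogeneous w i) ↔
        f ∈ Submodule.span K
          ((fun μ => (monomial μ (1 : K) : MvPolynomial (Fin n) K)) '' L))

namespace LexProof


/-- weight as plain ℕ sum -/
lemma wt_apply {n : ℕ} (w : Fin n → ℕ) (μ : Fin n →₀ ℕ) :
    Finsupp.weight w μ = ∑ x : Fin n, μ x * w x := by
  rw [Finsupp.weight_apply, Finsupp.sum_fintype]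
  · simp [smul_eq_mul]
  · intro i; simp

lemma wt_mono {n : ℕ} (w : Fin n → ℕ) {μ ν : Fin n →₀ ℕ} (h : μ ≤ ν) :
    Finsupp.weight w μ ≤ Finsupp.weight w ν := by
  rw [wt_apply, wt_apply]
  exact Finset.sum_le_sum fun x _ => Nat.mul_le_mul_right _ (h x)

lemma wt_add {n : ℕ} (w : Fin n → ℕ) (μ ν : Fin n →₀ ℕ) :
    Finsupp.weight w (μ + ν) = Finsupp.weight w μ + Finsupp.weight w ν := by
  exact map_add _ _ _

lemma add_sub_of_le' {n : ℕ} {μ ν : Fin n →₀ ℕ} (h : μ ≤ ν) : μ + (ν - μ) = ν := by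
  ext x
  have := h x
  simp only [Finsupp.add_apply, Finsupp.tsub_apply]
  omega

lemma wt_sub {n : ℕ} (w : Fin n → ℕ) {μ ν : Fin n →₀ ℕ} (h : μ ≤ ν) :
    Finsupp.weight w μ + Finsupp.weight w (ν - μ) = Finsupp.weight w ν := by
  rw [← wt_add, add_sub_of_le' h]

lemma wt_single {n : ℕ} (w : Fin n → ℕ) (x : Fin n) (c : ℕ) :
    Finsupp.weight w (Finsupp.single x c) = c * w x := by
  rw [wt_apply]
  rw [Finset.sum_eq_single x]
  · simp
  · intro b _ hb; rw [Finsupp.single_eq_of_ne' (Ne.symm hb)]; ring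
  · intro h; exact absurd (Finset.mem_univ x) h

lemma wt_cons {n : ℕ} (w : Fin (n+1) → ℕ) (a : ℕ) (t : Fin n →₀ ℕ) :
    Finsupp.weight w (Finsupp.cons a t) = a * w 0 + Finsupp.weight (fun x => w x.succ) t := by
  rw [wt_apply, wt_apply, Fin.sum_univ_succ]
  simp

lemma wt_tail {n : ℕ} (w : Fin (n+1) → ℕ) (μ : Fin (n+1) →₀ ℕ) :
    Finsupp.weight w μ = μ 0 * w 0 + Finsupp.weight (fun x => w x.succ) (Finsupp.tail μ) := by
  conv_lhs => rw [← Finsupp.cons_tail μ]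
  rw [wt_cons]

lemma le_cons_iff {n : ℕ} {a b : ℕ} {s t : Fin n →₀ ℕ} :
    Finsupp.cons a s ≤ Finsupp.cons b t ↔ a ≤ b ∧ s ≤ t := by
  constructor
  · intro h
    refine ⟨h 0, fun x => ?_⟩
    have := h x.succ
    simpa using this
  · intro ⟨h1, h2⟩ x
    refine Fin.cases ?_ (fun i => ?_) x
    · simpa using h1
    · simpa using h2 i

lemma tail_le_tail {n : ℕ} {μ ν : Fin (n+1) →₀ ℕ} (h : μ ≤ ν) :
    Finsupp.tail μ ≤ Finsupp.tail ν := by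
  intro x
  have := h x.succ
  simpa [Finsupp.tail_apply] using this

lemma lexlt_cons_iff {n : ℕ} {a b : ℕ} {s t : Fin n →₀ ℕ} :
    LexLT (Finsupp.cons a s) (Finsupp.cons b t) ↔ a < b ∨ (a = b ∧ LexLT s t) := by
  constructor
  · rintro ⟨k, hk, hpre⟩
    refine Fin.cases ?_ (fun i hk hpre => ?_) k hk hpre
    · intro hk _; left; simpa using hk
    · right
      constructor
      · have := hpre 0 (Fin.succ_pos i)
        simpa using this
      · refine ⟨i, by simpa using hk, fun j hj => ?_⟩
        have := hpre j.succ (by simpa [Fin.succ_lt_succ_iff] using hj)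
        simpa using this
  · rintro (h | ⟨rfl, k, hk, hpre⟩)
    · refine ⟨0, by simpa using h, fun s hs => ?_⟩
      exact absurd hs (Fin.not_lt_zero s)
    · refine ⟨k.succ, by simpa using hk, fun j => ?_⟩
      refine Fin.cases (fun _ => by simp) (fun i hij => ?_) j
      have : i < k := by simpa [Fin.succ_lt_succ_iff] using hij
      simpa using hpre i this

lemma lexlt_total {n : ℕ} {μ ν : Fin n →₀ ℕ} (h : μ ≠ ν) : LexLT μ ν ∨ LexLT ν μ := by
  have hne : (Finset.univ.filter (fun x => μ x ≠ ν x)).Nonempty := by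
    by_contra hc
    rw [Finset.not_nonempty_iff_eq_empty] at hc
    apply h
    ext x
    by_contra hx
    have : x ∈ Finset.univ.filter (fun x => μ x ≠ ν x) := by simp [hx]
    simp [hc] at this
  set k := (Finset.univ.filter (fun x => μ x ≠ ν x)).min' hne with hkdef
  have hkmem : μ k ≠ ν k := by
    have := (Finset.univ.filter (fun x => μ x ≠ ν x)).min'_mem hne
    simpa using this
  have hpre : ∀ s, s < k → μ s = ν s := by
    intro s hs
    by_contra hc
    have : k ≤ s := Finset.min'_le _ _ (by simp [hc])
    omega
  rcases Nat.lt_or_ge (μ k) (ν k) with h1 | h1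
  · exact Or.inl ⟨k, h1, hpre⟩
  · exact Or.inr ⟨k, by omega, fun s hs => (hpre s hs).symm⟩



lemma wt_apply' {n : ℕ} (w : Fin n → ℕ) (μ : Fin n →₀ ℕ) :
    Finsupp.weight w μ = ∑ x : Fin n, μ x * w x := by
  rw [Finsupp.weight_apply, Finsupp.sum_fintype]
  · simp [smul_eq_mul]
  · intro i; simp

lemma finset_gcd_bezout {ι : Type*} [DecidableEq ι] (s : Finset ι) (u : ι → ℕ) :
    ∃ c : ι → ℤ, ∑ x ∈ s, c x * (u x : ℤ) = ((s.gcd u : ℕ) : ℤ) := by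
  induction s using Finset.induction_on with
  | empty => exact ⟨0, by simp⟩
  | @insert a s ha ih =>
    obtain ⟨c, hc⟩ := ih
    refine ⟨fun x => if x = a then Nat.gcdA (u a) (s.gcd u) else Nat.gcdB (u a) (s.gcd u) * c x, ?_⟩
    rw [Finset.sum_insert ha, Finset.gcd_insert]
    have h2 : ∑ x ∈ s, (if x = a then Nat.gcdA (u a) (s.gcd u) else Nat.gcdB (u a) (s.gcd u) * c x) * (u x : ℤ)
        = Nat.gcdB (u a) (s.gcd u) * ∑ x ∈ s, c x * (u x : ℤ) := by
      rw [Finset.mul_sum]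
      refine Finset.sum_congr rfl fun x hx => ?_
      have : x ≠ a := fun h => ha (h ▸ hx)
      rw [if_neg this]; ring
    rw [h2, hc]
    have := Nat.gcd_eq_gcd_ab (u a) (s.gcd u)
    show (_ : ℤ) = (Nat.gcd (u a) (s.gcd u) : ℤ)
    rw [this]
    simp only [if_true]
    ring

lemma exists_wt_eq {m : ℕ} (u : Fin m → ℕ) (q G W : ℕ) (hq : 0 < q)
    (hdvd : ∀ x, u x ∣ q) (hupos : ∀ x, 0 < u x)
    (hFact : ∀ (β : Fin m →₀ ℕ) (H : ℕ), G + H * q < Finsupp.weight u β →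
      ∃ ρ, ρ ≤ β ∧ Finsupp.weight u ρ = H * q)
    (hW : G < W) (hgcd : Finset.univ.gcd u ∣ W) :
    ∃ θ : Fin m →₀ ℕ, Finsupp.weight u θ = W := by
  rcases Nat.eq_zero_or_pos m with hm | hm
  · subst hm
    have : (Finset.univ : Finset (Fin 0)) = ∅ := rfl
    rw [this, Finset.gcd_empty] at hgcd
    rw [zero_dvd_iff] at hgcd
    omega
  -- Bezout
  obtain ⟨c, hc⟩ := finset_gcd_bezout (Finset.univ : Finset (Fin m)) u
  set g := (Finset.univ : Finset (Fin m)).gcd u with hg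
  obtain ⟨r, hr⟩ := hgcd
  -- the candidate exponents
  set Mx : Fin m → ℕ := fun x => q / u x with hMx
  have hMpos : ∀ x, 0 < Mx x := fun x => Nat.div_pos (Nat.le_of_dvd hq (hdvd x)) (hupos x)
  have hMmul : ∀ x, Mx x * u x = q := fun x => Nat.div_mul_cancel (hdvd x)
  set a : Fin m → ℕ := fun x => (((r : ℤ) * c x) % (Mx x : ℤ)).toNat with ha
  have haz : ∀ x, (a x : ℤ) = ((r : ℤ) * c x) % (Mx x : ℤ) := by
    intro x
    rw [ha]
    exact Int.toNat_of_nonneg (Int.emod_nonneg _ (by exact_mod_cast (hMpos x).ne'))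
  set Y : Fin m →₀ ℕ := Finsupp.equivFunOnFinite.symm a with hY
  have hYx : ∀ x, Y x = a x := fun x => rfl
  set S := Finsupp.weight u Y with hS
  have hSsum : (S : ℤ) = ∑ x : Fin m, (a x : ℤ) * (u x : ℤ) := by
    rw [hS, wt_apply']
    push_cast
    exact Finset.sum_congr rfl fun x _ => by rw [hYx]
  have key : (q : ℤ) ∣ (S : ℤ) - (W : ℤ) := by
    have h1 : ∀ x : Fin m, (q:ℤ) ∣ ((a x : ℤ) * u x - (r : ℤ) * c x * u x) := by
      intro x
      refine ⟨-(((r : ℤ) * c x) / (Mx x : ℤ)), ?_⟩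
      have hqe : ((q:ℕ):ℤ) = (Mx x : ℤ) * (u x : ℤ) := by exact_mod_cast (hMmul x).symm
      have hax : (a x : ℤ) = (r : ℤ) * c x - (Mx x : ℤ) * (((r : ℤ) * c x) / (Mx x : ℤ)) := by
        rw [haz x, Int.emod_def]
      rw [hax, hqe]; ring
    have h2 : (q:ℤ) ∣ ∑ x : Fin m, ((a x : ℤ) * u x - (r : ℤ) * c x * u x) :=
      Finset.dvd_sum (fun x _ => h1 x)
    have h3 : ∑ x : Fin m, ((a x : ℤ) * u x - (r : ℤ) * c x * u x)
        = (S:ℤ) - (W:ℤ) := by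
      rw [Finset.sum_sub_distrib, ← hSsum]
      have h4 : ∑ x : Fin m, (r:ℤ) * c x * (u x:ℤ) = (r:ℤ) * ∑ x : Fin m, c x * (u x:ℤ) := by
        rw [Finset.mul_sum]; exact Finset.sum_congr rfl fun x _ => by ring
      rw [h4, hc]
      have h5 : (W:ℤ) = ((g:ℕ):ℤ) * (r:ℤ) := by exact_mod_cast hr
      rw [h5]; ring
    rwa [h3] at h2
  have wt_single' : ∀ (x : Fin m) (k : ℕ), Finsupp.weight u (Finsupp.single x k) = k * u x := by
    intro x k
    rw [wt_apply']
    rw [Finset.sum_eq_single x]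
    · simp
    · intro b _ hb; rw [Finsupp.single_eq_of_ne' (Ne.symm hb)]; ring
    · intro h; exact absurd (Finset.mem_univ x) h
  rcases le_or_gt S W with hle | hlt
  · have hdvd2 : q ∣ (W - S) := by
      have hcast : ((W - S : ℕ) : ℤ) = -((S:ℤ) - (W:ℤ)) := by push_cast; omega
      have h4 : (q:ℤ) ∣ ((W - S : ℕ) : ℤ) := by rw [hcast]; exact dvd_neg.mpr key
      exact_mod_cast h4
    obtain ⟨k, hk⟩ := hdvd2
    set x0 : Fin m := ⟨0, hm⟩
    refine ⟨Y + Finsupp.single x0 (k * Mx x0), ?_⟩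
    rw [map_add, wt_single']
    have h6 : k * Mx x0 * u x0 = k * q := by rw [mul_assoc, hMmul]
    rw [h6, ← hS]
    have hkq : q * k = k * q := by ring
    omega
  · have hdvd2 : q ∣ (S - W) := by
      have hcast : ((S - W : ℕ) : ℤ) = (S:ℤ) - (W:ℤ) := by push_cast; omega
      have h4 : (q:ℤ) ∣ ((S - W : ℕ) : ℤ) := by rw [hcast]; exact key
      exact_mod_cast h4
    obtain ⟨k, hk⟩ := hdvd2
    obtain ⟨ρ, hρle, hρwt⟩ := hFact Y k (by
      show G + k * q < Finsupp.weight u Y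
      rw [← hS]
      have : q * k = k * q := by ring
      omega)
    refine ⟨Y - ρ, ?_⟩
    have hsp : Finsupp.weight u ρ + Finsupp.weight u (Y - ρ) = Finsupp.weight u Y := by
      rw [← map_add]
      congr 1
      ext x
      have := hρle x
      simp only [Finsupp.add_apply, Finsupp.tsub_apply]
      omega
    rw [← hS] at hsp
    have : q * k = k * q := by ring
    omega



lemma single_le_of_mem {n : ℕ} {ξ : Fin n →₀ ℕ} {x1 : Fin n} (h : 0 < ξ x1) :
    Finsupp.single x1 1 ≤ ξ := by
  intro y
  rcases eq_or_ne y x1 with rfl | hne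
  · simpa using Nat.succ_le_of_lt h
  · simp [Finsupp.single_eq_of_ne' (Ne.symm hne)]

lemma descent {n : ℕ} (u : Fin n → ℕ) (q : ℕ) (hq : 0 < q) (hudvd : ∀ x, u x ∣ q)
    (hupos : ∀ x, 0 < u x) (P v0 A L : ℕ) (hPv : P * v0 ≤ q) (hPpos : 0 < P) (hv0 : 0 < v0)
    (ν' : Fin n →₀ ℕ) :
    ∀ x l (ξ : Fin n →₀ ℕ), 1 ≤ l → l ≤ L → ξ ≤ ν' → x = P * l * v0 + Finsupp.weight u ξ →
      A < x →
      ∃ l₂ ξ₂, 1 ≤ l₂ ∧ l₂ ≤ L ∧ ξ₂ ≤ ν' ∧ A < P * l₂ * v0 + Finsupp.weight u ξ₂ ∧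
        P * l₂ * v0 + Finsupp.weight u ξ₂ ≤ A + q := by
  intro x
  induction x using Nat.strong_induction_on with
  | _ x IH =>
    intro l ξ hl1 hlL hξν hx hAx
    rcases le_or_gt x (A + q) with hle | hgt
    · exact ⟨l, ξ, hl1, hlL, hξν, by omega, by omega⟩
    · have hPv0pos : 0 < P * v0 := Nat.mul_pos hPpos hv0
      rcases Nat.eq_zero_or_pos (Finsupp.weight u ξ) with hw0 | hwpos
      · rcases eq_or_lt_of_le hl1 with hl | hl2
        · exfalso
          have : x = P * v0 := by rw [hx, ← hl, hw0]; ring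
          omega
        · have harith : x - P * v0 = P * (l - 1) * v0 + Finsupp.weight u ξ := by
            obtain ⟨l', rfl⟩ : ∃ l', l = l' + 1 := ⟨l - 1, by omega⟩
            have h1 : P * (l' + 1 - 1) * v0 + P * v0 = P * (l' + 1) * v0 := by
              simp only [Nat.add_sub_cancel]
              ring
            omega
          have := IH (x - P * v0) (by omega) (l - 1) ξ (by omega) (by omega) hξν harith (by omega)
          exact this
      · have hsupp : ξ.support.Nonempty := by
          rw [Finsupp.support_nonempty_iff]
          intro h0
          rw [h0] at hwpos
          simp at hwpos
        obtain ⟨x1, hx1⟩ := hsupp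
        have hx1pos : 0 < ξ x1 := Nat.pos_of_ne_zero (Finsupp.mem_support_iff.mp hx1)
        have hle2 : Finsupp.single x1 1 ≤ ξ := single_le_of_mem hx1pos
        have hwt2 : Finsupp.weight u (Finsupp.single x1 1) + Finsupp.weight u (ξ - Finsupp.single x1 1) = Finsupp.weight u ξ := wt_sub u hle2
        have hwts : Finsupp.weight u (Finsupp.single x1 1) = u x1 := by
          rw [wt_single]; ring
        have hux1q : u x1 ≤ q := Nat.le_of_dvd hq (hudvd x1)
        have hux1pos : 0 < u x1 := hupos x1
        have harith : x - u x1 = P * l * v0 + Finsupp.weight u (ξ - Finsupp.single x1 1) := by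
          omega
        have := IH (x - u x1) (by omega) l (ξ - Finsupp.single x1 1) hl1 hlL
          (le_trans tsub_le_self hξν) harith (by omega)
        exact this



theorem core : ∀ (n : ℕ) (v : Fin n → ℕ) (q G : ℕ), 0 < q → (∀ x, 0 < v x) → (∀ x, v x ∣ q) →
    (∀ (β : Fin n →₀ ℕ) (H : ℕ), G + H * q < Finsupp.weight v β →
       ∃ ρ, ρ ≤ β ∧ Finsupp.weight v ρ = H * q) →
    ∀ σ μ ν : Fin n →₀ ℕ, σ ≤ μ → (LexLT μ ν ∨ μ = ν) →
    Finsupp.weight v μ = Finsupp.weight v ν →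
    Finsupp.weight v σ + q + G < Finsupp.weight v ν →
    ∃ σh ξ, σ ≤ σh ∧ ξ ≤ ν ∧ Finsupp.weight v σh = Finsupp.weight v ξ ∧
      Finsupp.weight v ξ ≤ Finsupp.weight v σ + q + G ∧ (LexLT σh ξ ∨ σh = ξ) := by
  intro n
  induction n with
  | zero =>
    intro v q G hq _ _ _ σ μ ν _ _ _ hbig
    exfalso
    have h1 : ν = 0 := Finsupp.ext fun x => x.elim0
    rw [h1, map_zero] at hbig
    omega
  | succ n ih =>
    intro v q G hq hvpos hvdvd hFact σ μ ν hσμ hμν hwt hbig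
    set u : Fin n → ℕ := fun x => v x.succ with hu
    set v0 := v 0 with hv0def
    have hv0pos : 0 < v0 := hvpos 0
    have tailFact : ∀ (β : Fin n →₀ ℕ) (H : ℕ), G + H * q < Finsupp.weight u β →
        ∃ ρ, ρ ≤ β ∧ Finsupp.weight u ρ = H * q := by
      intro β H hβ
      have hwtlift : Finsupp.weight v (Finsupp.cons 0 β) = Finsupp.weight u β := by
        rw [wt_cons]; simp; rfl
      obtain ⟨ρ, hρle, hρwt⟩ := hFact (Finsupp.cons 0 β) H (by rw [hwtlift]; exact hβ)
      have hρ0 : ρ 0 = 0 := by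
        have := hρle 0
        simpa using this
      refine ⟨Finsupp.tail ρ, ?_, ?_⟩
      · have := tail_le_tail hρle
        rwa [Finsupp.tail_cons] at this
      · have h5 : Finsupp.weight v ρ = ρ 0 * v 0 + Finsupp.weight u (Finsupp.tail ρ) := wt_tail v ρ
        rw [hρ0] at h5
        simp only [zero_mul, zero_add] at h5
        omega
    have hμ0ν0 : μ 0 ≤ ν 0 := by
      rcases hμν with hlt | heq
      · obtain ⟨k, hk, hpre⟩ := hlt
        rcases eq_or_ne k 0 with rfl | hne
        · exact le_of_lt hk
        · exact le_of_eq (hpre 0 (Fin.pos_of_ne_zero hne))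
      · rw [heq]
    -- weight decompositions
    have hwtμ : Finsupp.weight v μ = μ 0 * v0 + Finsupp.weight u (Finsupp.tail μ) := wt_tail v μ
    have hwtν : Finsupp.weight v ν = ν 0 * v0 + Finsupp.weight u (Finsupp.tail ν) := wt_tail v ν
    have hwtσ : Finsupp.weight v σ = σ 0 * v0 + Finsupp.weight u (Finsupp.tail σ) := wt_tail v σ
    rcases eq_or_lt_of_le hμ0ν0 with heq0 | hlt0
    · -- CASE heads equal
      have htails : LexLT (Finsupp.tail μ) (Finsupp.tail ν) ∨ Finsupp.tail μ = Finsupp.tail ν := by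
        rcases hμν with hlt | heq
        · have h2 : LexLT (Finsupp.cons (μ 0) (Finsupp.tail μ)) (Finsupp.cons (ν 0) (Finsupp.tail ν)) := by
            rw [Finsupp.cons_tail, Finsupp.cons_tail]; exact hlt
          rw [heq0] at h2
          rcases lexlt_cons_iff.mp h2 with h3 | ⟨_, h4⟩
          · omega
          · exact Or.inl h4
        · right; rw [heq]
      have hwt' : Finsupp.weight u (Finsupp.tail μ) = Finsupp.weight u (Finsupp.tail ν) := by
        have hμν0 : μ 0 * v0 = ν 0 * v0 := by rw [heq0]
        omega
      have hσ0μ0 : σ 0 ≤ μ 0 := hσμ 0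
      rcases le_or_gt (Finsupp.weight u (Finsupp.tail ν)) (Finsupp.weight u (Finsupp.tail σ) + q + G) with hsmall | hbig'
      · -- terminal: use μ', ν' directly
        refine ⟨Finsupp.cons (σ 0) (Finsupp.tail μ), Finsupp.cons (σ 0) (Finsupp.tail ν), ?_, ?_, ?_, ?_, ?_⟩
        · conv_lhs => rw [← Finsupp.cons_tail σ]
          exact le_cons_iff.mpr ⟨le_refl _, tail_le_tail hσμ⟩
        · conv_rhs => rw [← Finsupp.cons_tail ν]
          exact le_cons_iff.mpr ⟨by omega, le_refl _⟩
        · rw [wt_cons, wt_cons]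
          have b1 : Finsupp.weight (fun x => v x.succ) (Finsupp.tail ν) = Finsupp.weight u (Finsupp.tail ν) := rfl
          have b2 : Finsupp.weight (fun x => v x.succ) (Finsupp.tail μ) = Finsupp.weight u (Finsupp.tail μ) := rfl
          omega
        · rw [wt_cons]
          have b1 : Finsupp.weight (fun x => v x.succ) (Finsupp.tail ν) = Finsupp.weight u (Finsupp.tail ν) := rfl
          have b2 : σ 0 * v 0 = σ 0 * v0 := rfl
          omega
        · rcases htails with h | h
          · exact Or.inl (lexlt_cons_iff.mpr (Or.inr ⟨rfl, h⟩))
          · exact Or.inr (by rw [h])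
      · -- recurse
        obtain ⟨σh', ξ', h1, h2, h3, h4, h5⟩ := ih u q G hq (fun x => hvpos x.succ)
          (fun x => hvdvd x.succ) tailFact (Finsupp.tail σ) (Finsupp.tail μ) (Finsupp.tail ν)
          (tail_le_tail hσμ) htails hwt' hbig'
        refine ⟨Finsupp.cons (σ 0) σh', Finsupp.cons (σ 0) ξ', ?_, ?_, ?_, ?_, ?_⟩
        · conv_lhs => rw [← Finsupp.cons_tail σ]
          exact le_cons_iff.mpr ⟨le_refl _, h1⟩
        · conv_rhs => rw [← Finsupp.cons_tail ν]
          exact le_cons_iff.mpr ⟨by omega, h2⟩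
        · rw [wt_cons, wt_cons]
          have b1 : Finsupp.weight (fun x => v x.succ) σh' = Finsupp.weight u σh' := rfl
          have b2 : Finsupp.weight (fun x => v x.succ) ξ' = Finsupp.weight u ξ' := rfl
          omega
        · rw [wt_cons]
          have b1 : Finsupp.weight (fun x => v x.succ) ξ' = Finsupp.weight u ξ' := rfl
          have b2 : σ 0 * v 0 = σ 0 * v0 := rfl
          omega
        · rcases h5 with h | h
          · exact Or.inl (lexlt_cons_iff.mpr (Or.inr ⟨rfl, h⟩))
          · exact Or.inr (by rw [h])
    · -- CASE μ 0 < ν 0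
      have hσ0μ0 : σ 0 ≤ μ 0 := hσμ 0
      have hwtail : (ν 0 - μ 0) * v0 + Finsupp.weight u (Finsupp.tail ν) = Finsupp.weight u (Finsupp.tail μ) := by
        have hmul : (ν 0 - μ 0) * v0 + μ 0 * v0 = ν 0 * v0 := by
          rw [← add_mul]
          congr 1
          omega
        omega
      set g' := (Finset.univ : Finset (Fin n)).gcd u with hg'
      have hg'dvd : ∀ θ : Fin n →₀ ℕ, g' ∣ Finsupp.weight u θ := by
        intro θ
        rw [wt_apply']
        exact Finset.dvd_sum fun x _ => Dvd.dvd.mul_left (Finset.gcd_dvd (Finset.mem_univ x)) _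
      rcases Nat.eq_zero_or_pos n with hn0 | hnpos
      · exfalso
        subst hn0
        have h1 : Finsupp.weight u (Finsupp.tail μ) = 0 := by rw [wt_apply']; simp
        have h2 : Finsupp.weight u (Finsupp.tail ν) = 0 := by rw [wt_apply']; simp
        have h3 : 0 < (ν 0 - μ 0) * v0 := Nat.mul_pos (by omega) hv0pos
        omega
      set x0 : Fin n := ⟨0, hnpos⟩ with hx0
      have hg'pos : 0 < g' := by
        rcases Nat.eq_zero_or_pos g' with hzz | hpos
        · exfalso
          have hz1 := (Finset.gcd_eq_zero_iff).mp hzz x0 (Finset.mem_univ x0)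
          have hz2 : 0 < u x0 := hvpos x0.succ
          omega
        · exact hpos
      set gg := Nat.gcd v0 g' with hgg
      have hggpos : 0 < gg := Nat.gcd_pos_of_pos_right _ hg'pos
      set P := g' / gg with hP
      have hggdvdg' : gg ∣ g' := Nat.gcd_dvd_right v0 g'
      have hggdvdv0 : gg ∣ v0 := Nat.gcd_dvd_left v0 g'
      have hPpos : 0 < P := Nat.div_pos (Nat.le_of_dvd hg'pos hggdvdg') hggpos
      have hgP : gg * P = g' := Nat.mul_div_cancel' hggdvdg'
      have hPv_dvd_q : P * v0 ∣ q := by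
        have h1 : P * v0 = Nat.lcm v0 g' := by
          have h2 : gg * (P * v0) = gg * (Nat.lcm v0 g') := by
            rw [← mul_assoc, hgP]
            have h3 : gg * Nat.lcm v0 g' = v0 * g' := Nat.gcd_mul_lcm v0 g'
            rw [h3]
            ring
          exact Nat.eq_of_mul_eq_mul_left hggpos h2
        rw [h1]
        exact Nat.lcm_dvd (hvdvd 0) (dvd_trans (Finset.gcd_dvd (Finset.mem_univ x0)) (hvdvd x0.succ))
      have hPv_le_q : P * v0 ≤ q := Nat.le_of_dvd hq hPv_dvd_q
      have hg'_dvd_Pv : g' ∣ P * v0 := by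
        refine ⟨v0 / gg, ?_⟩
        rw [← hgP]
        have : v0 = gg * (v0 / gg) := (Nat.mul_div_cancel' hggdvdv0).symm
        calc P * v0 = P * (gg * (v0 / gg)) := by rw [← this]
        _ = gg * P * (v0 / gg) := by ring
      -- P ∣ ν 0 - μ 0
      have hdvdΔ : P ∣ (ν 0 - μ 0) := by
        have h1 : g' ∣ (ν 0 - μ 0) * v0 := by
          have heq2 : (ν 0 - μ 0) * v0 = Finsupp.weight u (Finsupp.tail μ) - Finsupp.weight u (Finsupp.tail ν) := by omega
          rw [heq2]
          exact Nat.dvd_sub (hg'dvd _) (hg'dvd _)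
        have h2 : gg * P ∣ gg * ((ν 0 - μ 0) * (v0 / gg)) := by
          rw [hgP]
          have h3 : gg * ((ν 0 - μ 0) * (v0 / gg)) = (ν 0 - μ 0) * v0 := by
            rw [← mul_assoc, mul_comm gg (ν 0 - μ 0), mul_assoc, Nat.mul_div_cancel' hggdvdv0]
          rw [h3]
          exact h1
        have h4 : P ∣ (ν 0 - μ 0) * (v0 / gg) := (mul_dvd_mul_iff_left (by omega : gg ≠ 0)).mp h2
        have hcop : Nat.Coprime (v0 / gg) (P) := by
          rw [hP, hgg]
          exact Nat.coprime_div_gcd_div_gcd (by rw [← hgg]; omega)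
        exact Nat.Coprime.dvd_of_dvd_mul_right hcop.symm h4
      have hΔpos : 0 < ν 0 - μ 0 := by omega
      have hPΔ : P ≤ ν 0 - μ 0 := Nat.le_of_dvd hΔpos hdvdΔ
      set e' := Finsupp.weight u (Finsupp.tail σ) with he'
      set A := G + e' with hA
      set h := ν 0 - σ 0 with hh
      set L := h / P with hL
      have hPh : P ≤ h := by omega
      have hLpos : 1 ≤ L := (Nat.one_le_div_iff hPpos).mpr hPh
      have hPLh : P * L ≤ h := by
        rw [hL, mul_comm]
        exact Nat.div_mul_le_self h P
      have hmodsum : P * L + h % P = h := by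
        rw [hL]
        have := Nat.div_add_mod h P
        omega
      have hmodlt : h % P < P := Nat.mod_lt h hPpos
      -- top point exceeds A
      have htop : A < P * L * v0 + Finsupp.weight u (Finsupp.tail ν) := by
        have e1 : P * L * v0 + (h % P) * v0 = h * v0 := by
          rw [← add_mul, hmodsum]
        have e2 : (h % P) * v0 + v0 ≤ P * v0 := by
          have : ((h % P) + 1) * v0 ≤ P * v0 := Nat.mul_le_mul_right v0 (by omega)
          calc (h % P) * v0 + v0 = ((h % P) + 1) * v0 := by ring
          _ ≤ P * v0 := this
        have e3 : h * v0 + σ 0 * v0 = ν 0 * v0 := by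
          rw [← add_mul]
          congr 1
          omega
        omega
      obtain ⟨l₂, ξ₂, hl₂1, hl₂L, hξ₂ν, hval1, hval2⟩ :=
        descent u q hq (fun x => hvdvd x.succ) (fun x => hvpos x.succ) P v0 A L hPv_le_q hPpos hv0pos
          (Finsupp.tail ν) (P * L * v0 + Finsupp.weight u (Finsupp.tail ν)) L (Finsupp.tail ν)
          hLpos (le_refl L) (le_refl _) rfl htop
      set val := P * l₂ * v0 + Finsupp.weight u ξ₂ with hvaldef
      set R := val - e' with hR
      have hRG : G < R := by omega
      have hg'R : g' ∣ R := by
        have h1 : g' ∣ val := by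
          have h2 : g' ∣ P * l₂ * v0 := by
            have : P * l₂ * v0 = (P * v0) * l₂ := by ring
            rw [this]
            exact Dvd.dvd.mul_right hg'_dvd_Pv l₂
          exact Nat.dvd_add h2 (hg'dvd ξ₂)
        have h3 : g' ∣ e' := hg'dvd _
        exact Nat.dvd_sub h1 h3
      obtain ⟨θ', hθ'⟩ := exists_wt_eq u q G R hq (fun x => hvdvd x.succ) (fun x => hvpos x.succ)
        tailFact hRG (hg' ▸ hg'R)
      refine ⟨Finsupp.cons (σ 0) (Finsupp.tail σ + θ'), Finsupp.cons (σ 0 + P * l₂) ξ₂,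
        ?_, ?_, ?_, ?_, ?_⟩
      · conv_lhs => rw [← Finsupp.cons_tail σ]
        refine le_cons_iff.mpr ⟨le_refl _, fun y => ?_⟩
        simp only [Finsupp.add_apply]
        omega
      · conv_rhs => rw [← Finsupp.cons_tail ν]
        refine le_cons_iff.mpr ⟨?_, hξ₂ν⟩
        have : P * l₂ ≤ P * L := Nat.mul_le_mul_left P hl₂L
        omega
      · rw [wt_cons, wt_cons, map_add]
        have b1 : Finsupp.weight (fun x => v x.succ) (Finsupp.tail σ) = e' := rfl
        have b2 : Finsupp.weight (fun x => v x.succ) θ' = Finsupp.weight u θ' := rfl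
        have b3 : Finsupp.weight (fun x => v x.succ) ξ₂ = Finsupp.weight u ξ₂ := rfl
        have b4 : (σ 0 + P * l₂) * v 0 = σ 0 * v0 + P * l₂ * v0 := by
          show (σ 0 + P * l₂) * v0 = _
          ring
        have b5 : σ 0 * v 0 = σ 0 * v0 := rfl
        omega
      · rw [wt_cons]
        have b3 : Finsupp.weight (fun x => v x.succ) ξ₂ = Finsupp.weight u ξ₂ := rfl
        have b4 : (σ 0 + P * l₂) * v 0 = σ 0 * v0 + P * l₂ * v0 := by
          show (σ 0 + P * l₂) * v0 = _
          ring
        omega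
      · refine Or.inl (lexlt_cons_iff.mpr (Or.inl ?_))
        have : 0 < P * l₂ := Nat.mul_pos hPpos (by omega)
        omega


end LexProof

/-- **Finitely many lexsegment components suffice.**
Let `R` be a weighted polynomial ring over an infinite field of characteristic `0` with
positive weights listed in increasing order, `q` the lcm of the weights, and `G` a bound
such that every monomial of weighted degree `m + h·q` with `m > G` is divisible by a
monomial of weighted degree `h·q` (the invariant `G(w)`).  If `I` is a homogeneous ideal
generated in degrees `≤ d` whose components of degree `i ≤ d + q + G` are all spanned by
lexsegments, then `I` is a lexicographic ideal, i.e. all of its components are spanned by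
lexsegments. -/
theorem lex_ideal_from_finitely_many_components
    (K : Type*) [Field K] [CharZero K]
    (n : ℕ) (w : Fin n → ℕ) (hpos : ∀ k, 0 < w k) (hmono : Monotone w)
    (G : ℕ)
    (hG : ∀ m : ℕ, G < m → ∀ h : ℕ, ∀ μ : Fin n →₀ ℕ,
      Finsupp.weight w μ = m + h * Finset.univ.lcm w →
      ∃ ν : Fin n →₀ ℕ, ν ≤ μ ∧ Finsupp.weight w ν = h * Finset.univ.lcm w)
    (I : Ideal (MvPolynomial (Fin n) K)) (d : ℕ)
    (hgen : ∃ S : Set (MvPolynomial (Fin n) K),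
      (∀ f ∈ S, ∃ e ≤ d, f.IsWeightedHomogeneous w e) ∧ I = Ideal.span S)
    (hlex : ∀ i : ℕ, i ≤ d + Finset.univ.lcm w + G → LexSegComponent w I i) :
    ∀ i : ℕ, LexSegComponent w I i := by
  intro i
  set q := Finset.univ.lcm w with hqdef
  by_cases hiD : i ≤ d + q + G
  · exact hlex i hiD
  push_neg at hiD
  have hq : 0 < q := by
    rcases Nat.eq_zero_or_pos q with h0 | h
    · exfalso
      rw [hqdef] at h0
      obtain ⟨x, -, hx⟩ := (Finset.lcm_eq_zero_iff).mp h0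
      have := hpos x
      omega
    · exact h
  have hdvd : ∀ x, w x ∣ q := fun x => Finset.dvd_lcm (Finset.mem_univ x)
  have hFact : ∀ (β : Fin n →₀ ℕ) (H : ℕ), G + H * q < Finsupp.weight w β →
      ∃ ρ, ρ ≤ β ∧ Finsupp.weight w ρ = H * q := by
    intro β H hβ
    obtain ⟨ρ, hρ1, hρ2⟩ := hG (Finsupp.weight w β - H * q) (by omega) H β (by omega)
    exact ⟨ρ, hρ1, hρ2⟩
  obtain ⟨S, hS1, hS2⟩ := hgen
  set T : Set (Fin n →₀ ℕ) :=
    {χ | (monomial χ (1:K) : MvPolynomial (Fin n) K) ∈ I ∧ Finsupp.weight w χ ≤ d} with hT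
  have mono_span : ∀ (L : Set (Fin n →₀ ℕ)) (χ : Fin n →₀ ℕ),
      (monomial χ (1:K) : MvPolynomial (Fin n) K) ∈
        Submodule.span K ((fun μ => (monomial μ (1:K) : MvPolynomial (Fin n) K)) '' L) →
      χ ∈ L := by
    intro L χ hmem
    by_contra hχ
    have hker : Submodule.span K ((fun μ => (monomial μ (1:K) : MvPolynomial (Fin n) K)) '' L) ≤
        LinearMap.ker (lcoeff K χ) := by
      rw [Submodule.span_le]
      rintro f ⟨μ', hμ', rfl⟩
      simp only [SetLike.mem_coe, LinearMap.mem_ker, lcoeff_apply]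
      rw [coeff_monomial, if_neg]
      intro h
      exact hχ (h ▸ hμ')
    have h2 := hker hmem
    rw [LinearMap.mem_ker, lcoeff_apply] at h2
    rw [coeff_monomial, if_pos rfl] at h2
    exact one_ne_zero h2
  have mono_dvd_mem : ∀ (τ χ : Fin n →₀ ℕ), τ ≤ χ →
      (monomial τ (1:K) : MvPolynomial (Fin n) K) ∈ I →
      (monomial χ (1:K) : MvPolynomial (Fin n) K) ∈ I := by
    intro τ χ hle hmem
    have hexp : χ - τ + τ = χ := by
      ext x
      have := hle x
      simp only [Finsupp.add_apply, Finsupp.tsub_apply]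
      omega
    have heq : (monomial χ (1:K) : MvPolynomial (Fin n) K)
        = monomial (χ - τ) (1:K) * monomial τ (1:K) := by
      rw [monomial_mul, one_mul, hexp]
    rw [heq]
    exact Ideal.mul_mem_left I _ hmem
  have memL : ∀ j, j ≤ d + q + G → ∀ χ : Fin n →₀ ℕ,
      (monomial χ (1:K) : MvPolynomial (Fin n) K) ∈ I → Finsupp.weight w χ = j →
      ∀ ν : Fin n →₀ ℕ, Finsupp.weight w ν = j → (LexLT χ ν ∨ χ = ν) →
      (monomial ν (1:K) : MvPolynomial (Fin n) K) ∈ I := by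
    intro j hj χ hχI hχw ν hνw hlex'
    obtain ⟨L, hL1, hL2, hL3⟩ := hlex j hj
    have hχL : χ ∈ L := mono_span L χ
      ((hL3 _).mp ⟨hχI, isWeightedHomogeneous_monomial _ _ _ hχw⟩)
    have hνL : ν ∈ L := by
      rcases hlex' with h | h
      · exact hL2 χ hχL ν hνw h
      · exact h ▸ hχL
    exact ((hL3 (monomial ν 1)).mpr (Submodule.subset_span ⟨ν, hνL, rfl⟩)).1
  have hITle : I ≤ Ideal.span ((fun χ => (monomial χ (1:K) : MvPolynomial (Fin n) K)) '' T) := by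
    conv_lhs => rw [hS2]
    rw [Ideal.span_le]
    intro f hfS
    obtain ⟨e, he, hhom⟩ := hS1 f hfS
    have hfI : f ∈ I := hS2 ▸ Ideal.subset_span hfS
    obtain ⟨L, hL1, hL2, hL3⟩ := hlex e (by omega)
    have hfsp := (hL3 f).mp ⟨hfI, hhom⟩
    have hLT : ((fun μ => (monomial μ (1:K) : MvPolynomial (Fin n) K)) '' L)
        ⊆ ((fun χ => (monomial χ (1:K) : MvPolynomial (Fin n) K)) '' T) := by
      rintro g ⟨μ', hμ', rfl⟩
      refine ⟨μ', ⟨?_, ?_⟩, rfl⟩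
      · exact ((hL3 _).mpr (Submodule.subset_span ⟨μ', hμ', rfl⟩)).1
      · rw [hL1 μ' hμ']
        exact he
    have h2 : Submodule.span K ((fun μ => (monomial μ (1:K) : MvPolynomial (Fin n) K)) '' L) ≤
        Submodule.restrictScalars K (Ideal.span ((fun χ => (monomial χ (1:K) : MvPolynomial (Fin n) K)) '' T)) := by
      rw [Submodule.span_le]
      exact fun g hg => Ideal.subset_span (hLT hg)
    exact h2 hfsp
  have hITge : Ideal.span ((fun χ => (monomial χ (1:K) : MvPolynomial (Fin n) K)) '' T) ≤ I := by
    rw [Ideal.span_le]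
    rintro g ⟨χ, hχ, rfl⟩
    exact hχ.1
  have hIT : I = Ideal.span ((fun χ => (monomial χ (1:K) : MvPolynomial (Fin n) K)) '' T) :=
    le_antisymm hITle hITge
  have hmem_iff : ∀ f : MvPolynomial (Fin n) K, f ∈ I ↔ ∀ χ ∈ f.support, ∃ τ ∈ T, τ ≤ χ := by
    intro f
    conv_lhs => rw [hIT]
    exact mem_ideal_span_monomial_image
  have hmono_T : ∀ χ : Fin n →₀ ℕ, (monomial χ (1:K) : MvPolynomial (Fin n) K) ∈ I →
      ∃ τ ∈ T, τ ≤ χ := by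
    intro χ h
    refine (hmem_iff _).mp h χ ?_
    rw [mem_support_iff]
    simp
  refine ⟨{χ | Finsupp.weight w χ = i ∧ ∃ τ ∈ T, τ ≤ χ}, ?_, ?_, ?_⟩
  · intro μ hμ
    exact hμ.1
  · rintro χ ⟨hχw, τ, hτT, hτχ⟩ ν hνw hlt
    obtain ⟨σh, ξ, hσh1, hξν, hwteq, hwin, hlex2⟩ :=
      LexProof.core n w q G hq hpos hdvd hFact τ χ ν hτχ (Or.inl hlt)
        (by rw [hχw, hνw]) (by have := hτT.2; omega)
    have hσhI : (monomial σh (1:K) : MvPolynomial (Fin n) K) ∈ I :=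
      mono_dvd_mem τ σh hσh1 hτT.1
    have hξI : (monomial ξ (1:K) : MvPolynomial (Fin n) K) ∈ I :=
      memL (Finsupp.weight w ξ) (by have := hτT.2; omega) σh hσhI hwteq ξ rfl hlex2
    obtain ⟨τ', hτ'T, hτ'ξ⟩ := hmono_T ξ hξI
    exact ⟨hνw, τ', hτ'T, le_trans hτ'ξ hξν⟩
  · intro f
    constructor
    · rintro ⟨hfI, hfhom⟩
      have hsupp : ∀ χ ∈ f.support, χ ∈ {χ | Finsupp.weight w χ = i ∧ ∃ τ ∈ T, τ ≤ χ} := by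
        intro χ hχs
        exact ⟨hfhom (mem_support_iff.mp hχs), (hmem_iff f).mp hfI χ hχs⟩
      have hrw : f = ∑ χ ∈ f.support, monomial χ (coeff χ f) := f.as_sum
      rw [hrw]
      apply Submodule.sum_mem
      intro χ hχs
      have heq2 : (monomial χ (f.coeff χ) : MvPolynomial (Fin n) K)
          = (f.coeff χ) • monomial χ (1:K) := by
        rw [smul_monomial, smul_eq_mul, mul_one]
      rw [heq2]
      exact Submodule.smul_mem _ _ (Submodule.subset_span ⟨χ, hsupp χ hχs, rfl⟩)
    · intro hf
      constructor
      · have h2 : Submodule.span K ((fun μ => (monomial μ (1:K) : MvPolynomial (Fin n) K)) ''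
            {χ | Finsupp.weight w χ = i ∧ ∃ τ ∈ T, τ ≤ χ}) ≤ Submodule.restrictScalars K I := by
          rw [Submodule.span_le]
          rintro g ⟨χ, hχL, rfl⟩
          obtain ⟨-, τ, hτT, hτχ⟩ := hχL
          exact mono_dvd_mem τ χ hτχ hτT.1
        exact h2 hf
      · have h2 : Submodule.span K ((fun μ => (monomial μ (1:K) : MvPolynomial (Fin n) K)) ''
            {χ | Finsupp.weight w χ = i ∧ ∃ τ ∈ T, τ ≤ χ}) ≤ weightedHomogeneousSubmodule K w i := by
          rw [Submodule.span_le]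
          rintro g ⟨χ, hχL, rfl⟩
          simp only [SetLike.mem_coe, mem_weightedHomogeneousSubmodule]
          exact isWeightedHomogeneous_monomial _ _ _ hχL.1
        exact (mem_weightedHomogeneousSubmodule _ _ _ _).mp (h2 hf)
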